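/- Let A be a unital C*-algebra and a, b positive invertible elements of A. Then the spectrum of (b a⁻¹ b)^{-1/2} a (b a⁻¹ b)^{-1/2} equals the set of squares of elements of the spectrum of b^{-1/2} a b^{-1/2}; consequently d_T(b a⁻¹ b, a) = 2 d_T(b, a) for the Thompson metric d_T(x,y) = ‖log(x^{-1/2} y x^{-1/2})‖. -/

import Mathlib

/-- The inverse square root `x^{-1/2}` via the continuous functional calculus. -/
noncomputable def invSqrt {A : Type*} [CStarAlgebra A] (x : A) : A :=
  cfc (fun t : ℝ => (Real.sqrt t)⁻¹) x

/-- The Thompson metric of positive invertible elements, via the formula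
`d_T(x,y) = ‖log (x^{-1/2} y x^{-1/2})‖`. -/
noncomputable def thompsonDistLog {A : Type*} [CStarAlgebra A] (x y : A) : ℝ :=
  ‖cfc Real.log (invSqrt x * y * invSqrt x)‖

section Aux

variable {A : Type*} [CStarAlgebra A] [PartialOrder A] [StarOrderedRing A]

lemma spectrum_pos_of_unit (x : Aˣ) (hx : 0 ≤ (x : A)) :
    ∀ t ∈ spectrum ℝ (x : A), 0 < t := by
  intro t ht
  refine (spectrum_nonneg_of_nonneg hx ht).lt_of_ne' ?_
  rintro rfl
  exact spectrum.zero_notMem ℝ x.isUnit ht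

lemma continuousOn_invSqrtFun (x : Aˣ) (hx : 0 ≤ (x : A)) :
    ContinuousOn (fun t : ℝ => (Real.sqrt t)⁻¹) (spectrum ℝ (x : A)) := by
  refine ContinuousOn.inv₀ Real.continuous_sqrt.continuousOn fun t ht => ?_
  exact (Real.sqrt_pos.mpr (spectrum_pos_of_unit x hx t ht)).ne'

lemma invSqrt_nonneg (x : Aˣ) (hx : 0 ≤ (x : A)) : 0 ≤ invSqrt (x : A) := by
  have hsa : IsSelfAdjoint (x : A) := .of_nonneg hx
  exact cfc_nonneg fun t ht => by positivity

lemma invSqrt_selfAdjoint (x : Aˣ) (hx : 0 ≤ (x : A)) :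
    IsSelfAdjoint (invSqrt (x : A)) :=
  .of_nonneg (invSqrt_nonneg x hx)

lemma invSqrt_isUnit (x : Aˣ) (hx : 0 ≤ (x : A)) : IsUnit (invSqrt (x : A)) := by
  have hsa : IsSelfAdjoint (x : A) := .of_nonneg hx
  refine (isUnit_cfc_iff _ _ (continuousOn_invSqrtFun x hx) hsa).mpr fun t ht => ?_
  exact inv_ne_zero (Real.sqrt_pos.mpr (spectrum_pos_of_unit x hx t ht)).ne'

lemma invSqrt_mul_self (x : Aˣ) (hx : 0 ≤ (x : A)) :
    invSqrt (x : A) * invSqrt (x : A) = ((x⁻¹ : Aˣ) : A) := by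
  have hsa : IsSelfAdjoint (x : A) := .of_nonneg hx
  rw [invSqrt, ← cfc_mul _ _ _ (continuousOn_invSqrtFun x hx) (continuousOn_invSqrtFun x hx),
    ← cfc_inv_id (R := ℝ) x]
  refine cfc_congr fun t ht => ?_
  have h := spectrum_pos_of_unit x hx t ht
  rw [← mul_inv, Real.mul_self_sqrt h.le]

lemma units_inv_nonneg (x : Aˣ) (hx : 0 ≤ (x : A)) : 0 ≤ ((x⁻¹ : Aˣ) : A) := by
  have hsa : IsSelfAdjoint (x : A) := .of_nonneg hx
  rw [← cfc_inv_id (R := ℝ) x]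
  exact cfc_nonneg fun t ht => inv_nonneg.mpr (spectrum_nonneg_of_nonneg hx ht)

lemma spectrum_invSqrt_conj (x : Aˣ) (hx : 0 ≤ (x : A)) (a : A) :
    spectrum ℝ (invSqrt (x : A) * a * invSqrt (x : A))
      = spectrum ℝ (a * ((x⁻¹ : Aˣ) : A)) := by
  obtain ⟨u, hu⟩ := invSqrt_isUnit x hx
  have key : invSqrt (x : A) * a * invSqrt (x : A)
      = (u : A) * (a * ((x⁻¹ : Aˣ) : A)) * ((u⁻¹ : Aˣ) : A) := by
    rw [← invSqrt_mul_self x hx, ← hu]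
    simp [mul_assoc, Units.mul_inv]
  rw [key, spectrum.units_conjugate]

lemma spectrum_invSqrt_conj_sq (x : Aˣ) (hx : 0 ≤ (x : A)) (a : A) :
    spectrum ℝ ((invSqrt (x : A) * a * invSqrt (x : A)) ^ 2)
      = spectrum ℝ ((a * ((x⁻¹ : Aˣ) : A)) ^ 2) := by
  obtain ⟨u, hu⟩ := invSqrt_isUnit x hx
  have key : (invSqrt (x : A) * a * invSqrt (x : A)) ^ 2
      = (u : A) * ((a * ((x⁻¹ : Aˣ) : A)) ^ 2) * ((u⁻¹ : Aˣ) : A) := by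
    rw [← invSqrt_mul_self x hx, ← hu]
    simp [sq, mul_assoc, Units.mul_inv]
  rw [key, spectrum.units_conjugate]

end Aux

/-- For positive invertible elements `a, b` of a unital C*-algebra, the spectrum of
`(b a⁻¹ b)^{-1/2} a (b a⁻¹ b)^{-1/2}` is the set of squares of elements of the
spectrum of `b^{-1/2} a b^{-1/2}`; consequently `d_T(b a⁻¹ b, a) = 2 d_T(b, a)`. -/
theorem spectrum_square_and_thompson_doubling
    {A : Type*} [CStarAlgebra A] [PartialOrder A] [StarOrderedRing A]
    (a b : Aˣ) (ha : 0 ≤ (a : A)) (hb : 0 ≤ (b : A)) :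
    spectrum ℝ (invSqrt ((b : A) * ((a⁻¹ : Aˣ) : A) * (b : A)) * (a : A) *
        invSqrt ((b : A) * ((a⁻¹ : Aˣ) : A) * (b : A)))
      = (fun t : ℝ => t ^ 2) '' spectrum ℝ (invSqrt (b : A) * (a : A) * invSqrt (b : A)) ∧
    thompsonDistLog ((b : A) * ((a⁻¹ : Aˣ) : A) * (b : A)) (a : A)
      = 2 * thompsonDistLog (b : A) (a : A) := by
  have hbsa : IsSelfAdjoint (b : A) := .of_nonneg hb
  set c : Aˣ := b * a⁻¹ * b with hc
  have hcA : ((c : Aˣ) : A) = (b : A) * ((a⁻¹ : Aˣ) : A) * (b : A) := rfl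
  have hc_nonneg : 0 ≤ ((c : Aˣ) : A) := by
    rw [hcA]
    have := star_left_conjugate_nonneg (units_inv_nonneg a ha) (b : A)
    rwa [hbsa.star_eq] at this
  set Y : A := invSqrt (b : A) * (a : A) * invSqrt (b : A) with hY
  set X : A := invSqrt ((c : Aˣ) : A) * (a : A) * invSqrt ((c : Aˣ) : A) with hX
  have hY_nonneg : 0 ≤ Y := by
    have := star_right_conjugate_nonneg ha (invSqrt (b : A))
    rwa [(invSqrt_selfAdjoint b hb).star_eq] at this
  have hYsa : IsSelfAdjoint Y := .of_nonneg hY_nonneg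
  have hX_nonneg : 0 ≤ X := by
    have := star_right_conjugate_nonneg ha (invSqrt ((c : Aˣ) : A))
    rwa [(invSqrt_selfAdjoint c hc_nonneg).star_eq] at this
  have hXsa : IsSelfAdjoint X := .of_nonneg hX_nonneg
  -- invertibility of X and Y
  have hY_unit : IsUnit Y := ((invSqrt_isUnit b hb).mul a.isUnit).mul (invSqrt_isUnit b hb)
  have hX_unit : IsUnit X :=
    ((invSqrt_isUnit c hc_nonneg).mul a.isUnit).mul (invSqrt_isUnit c hc_nonneg)
  -- the spectrum identity
  have hspec : spectrum ℝ X = (fun t : ℝ => t ^ 2) '' spectrum ℝ Y := by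
    have h1 : spectrum ℝ X = spectrum ℝ ((a : A) * ((c⁻¹ : Aˣ) : A)) :=
      spectrum_invSqrt_conj c hc_nonneg (a : A)
    have hcinv : ((c⁻¹ : Aˣ) : A) = ((b⁻¹ : Aˣ) : A) * (a : A) * ((b⁻¹ : Aˣ) : A) := by
      rw [hc]; simp [mul_assoc]
    have h2 : (a : A) * ((c⁻¹ : Aˣ) : A) = ((a : A) * ((b⁻¹ : Aˣ) : A)) ^ 2 := by
      rw [hcinv, sq]; simp [mul_assoc]
    have h3 : spectrum ℝ (Y ^ 2) = spectrum ℝ (((a : A) * ((b⁻¹ : Aˣ) : A)) ^ 2) :=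
      spectrum_invSqrt_conj_sq b hb (a : A)
    have h4 : spectrum ℝ (Y ^ 2) = (fun t : ℝ => t ^ 2) '' spectrum ℝ Y := by
      rw [← cfc_pow_id (R := ℝ) Y 2 hYsa, cfc_map_spectrum _ _ hYsa (continuous_pow 2).continuousOn]
    rw [h1, h2, ← h3, h4]
  refine ⟨hspec, ?_⟩
  -- the Thompson metric identity
  rcases subsingleton_or_nontrivial A with hsub | hnt
  · have h0 : ∀ z : A, z = 0 := fun z => Subsingleton.elim z 0
    simp [thompsonDistLog, h0 (cfc Real.log _)]
  · have hYspec_pos : ∀ t ∈ spectrum ℝ Y, 0 < t := by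
      intro t ht
      refine (spectrum_nonneg_of_nonneg hY_nonneg ht).lt_of_ne' ?_
      rintro rfl
      exact spectrum.zero_notMem ℝ hY_unit ht
    have hXlog : ContinuousOn Real.log (spectrum ℝ X) := by
      refine Real.continuousOn_log.mono fun t ht => ?_
      simp only [Set.mem_compl_iff, Set.mem_singleton_iff]
      rintro rfl
      exact spectrum.zero_notMem ℝ hX_unit ht
    have hYlog : ContinuousOn Real.log (spectrum ℝ Y) := by
      refine Real.continuousOn_log.mono fun t ht => ?_
      simp only [Set.mem_compl_iff, Set.mem_singleton_iff]
      rintro rfl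
      exact spectrum.zero_notMem ℝ hY_unit ht
    have hgX : IsGreatest ((fun t => ‖Real.log t‖) '' spectrum ℝ X) ‖cfc Real.log X‖ :=
      IsGreatest.norm_cfc Real.log X hXlog hXsa
    have hgY : IsGreatest ((fun t => ‖Real.log t‖) '' spectrum ℝ Y) ‖cfc Real.log Y‖ :=
      IsGreatest.norm_cfc Real.log Y hYlog hYsa
    have hset : (fun t => ‖Real.log t‖) '' spectrum ℝ X
        = (fun r => 2 * r) '' ((fun t => ‖Real.log t‖) '' spectrum ℝ Y) := by
      rw [hspec, Set.image_image, Set.image_image]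
      refine Set.image_congr fun t ht => ?_
      rw [Real.log_pow]
      push_cast
      rw [Real.norm_eq_abs, Real.norm_eq_abs, abs_mul, abs_two]
    have hg2 : IsGreatest ((fun r => 2 * r) '' ((fun t => ‖Real.log t‖) '' spectrum ℝ Y))
        (2 * ‖cfc Real.log Y‖) := by
      constructor
      · exact ⟨_, hgY.1, rfl⟩
      · rintro r ⟨s, hs, rfl⟩
        have := hgY.2 hs
        dsimp only
        linarith
    have := hgX.unique (hset ▸ hg2)
    unfold thompsonDistLog
    rw [← hcA]
    exact this
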